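/- Suppose E[ξc] < 1. Then for the Galton-Watson process with neutral mutations started from a ancestors, the expected number of first-type mutants is E_a[M1] = a·E[ξm]/(1 − E[ξc]) = E[ξm]·E_a[T0]. In particular, E_1[M1] < 1, = 1, or > 1 according as E[ξc + ξm] < 1, = 1, or > 1. -/

import Mathlib

open scoped ENNReal
open MeasureTheory ProbabilityTheory

/-- `n`-fold convolution power of a law on `ℕ × ℕ`. -/
noncomputable def convPow (π : PMF (ℕ × ℕ)) : ℕ → PMF (ℕ × ℕ)
  | 0 => PMF.pure (0, 0)
  | n + 1 => (convPow π n).bind fun s => π.map fun t => (s.1 + t.1, s.2 + t.2)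

/-- `μ` is the joint law of `(T0, M1)` for the Galton-Watson process with neutral mutations,
one ancestor and offspring law `π` (clone children, mutant children). -/
def branchingFixedPoint (π μ : PMF (ℕ × ℕ)) : Prop :=
  μ = π.bind fun kl => (convPow μ kl.1).map fun s => (1 + s.1, kl.2 + s.2)

/-- if `E[ξc] < 1` then `E_a[M1] = a E[ξm]/(1 - E[ξc]) = E[ξm] E_a[T0]`,
and `E_1[M1] < 1`, `= 1`, `> 1` according as `E[ξc + ξm] < 1`, `= 1`, `> 1`. -/

lemma tsum_pure' {α : Type*} (x : α) (g : α → ℝ≥0∞) :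
    ∑' b, (PMF.pure x) b * g b = g x := by
  rw [tsum_eq_single x]
  · simp [PMF.pure_apply]
  · intro b hb; simp [PMF.pure_apply, hb]

lemma tsum_bind' {α β : Type*} (ρ : PMF α) (f : α → PMF β) (g : β → ℝ≥0∞) :
    ∑' b, (ρ.bind f) b * g b = ∑' a, ρ a * ∑' b, f a b * g b := by
  simp only [PMF.bind_apply]
  calc ∑' b, (∑' a, ρ a * f a b) * g b
      = ∑' b, ∑' a, ρ a * f a b * g b := by
        congr 1; ext b; exact ENNReal.tsum_mul_right.symm
    _ = ∑' a, ∑' b, ρ a * f a b * g b := ENNReal.tsum_comm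
    _ = ∑' a, ρ a * ∑' b, f a b * g b := by
        congr 1; ext a
        simp_rw [mul_assoc]
        exact ENNReal.tsum_mul_left

lemma tsum_map' {α β : Type*} (ρ : PMF α) (h : α → β) (g : β → ℝ≥0∞) :
    ∑' b, (ρ.map h) b * g b = ∑' a, ρ a * g (h a) := by
  rw [PMF.map, tsum_bind']
  simp only [Function.comp_apply, tsum_pure']

lemma tsum_one' {α : Type*} (ρ : PMF α) (c : ℝ≥0∞) : ∑' a, ρ a * c = c := by
  rw [ENNReal.tsum_mul_right, PMF.tsum_coe, one_mul]

lemma tsum_convPow_eq (μ : PMF (ℕ × ℕ)) (p : ℕ × ℕ → ℝ≥0∞)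
    (hp0 : p (0, 0) = 0)
    (hp : ∀ s t : ℕ × ℕ, p (s.1 + t.1, s.2 + t.2) = p s + p t) (n : ℕ) :
    ∑' s, convPow μ n s * p s = n * ∑' s, μ s * p s := by
  induction n with
  | zero => simp [convPow, tsum_pure']; exact hp0
  | succ n ih =>
    rw [show convPow μ (n+1) = (convPow μ n).bind fun s => μ.map fun t =>
      (s.1 + t.1, s.2 + t.2) from rfl, tsum_bind']
    have : ∀ s : ℕ × ℕ, (∑' b, (μ.map fun t => (s.1 + t.1, s.2 + t.2)) b * p b)
        = p s + ∑' t, μ t * p t := by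
      intro s
      rw [tsum_map']
      simp_rw [hp s, mul_add, ENNReal.tsum_add, tsum_one']
    simp_rw [this, mul_add, ENNReal.tsum_add, tsum_one', ih]
    push_cast
    ring

lemma tsum_convPow_le (μ : PMF (ℕ × ℕ)) (p : ℕ × ℕ → ℝ≥0∞)
    (hp0 : p (0, 0) = 0)
    (hp : ∀ s t : ℕ × ℕ, p (s.1 + t.1, s.2 + t.2) ≤ p s + p t) (n : ℕ) :
    ∑' s, convPow μ n s * p s ≤ n * ∑' s, μ s * p s := by
  induction n with
  | zero => simp [convPow, tsum_pure']; exact hp0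
  | succ n ih =>
    rw [show convPow μ (n+1) = (convPow μ n).bind fun s => μ.map fun t =>
      (s.1 + t.1, s.2 + t.2) from rfl, tsum_bind']
    have h1 : ∀ s : ℕ × ℕ, (∑' b, (μ.map fun t => (s.1 + t.1, s.2 + t.2)) b * p b)
        ≤ p s + ∑' t, μ t * p t := by
      intro s
      rw [tsum_map']
      calc ∑' t, μ t * p (s.1 + t.1, s.2 + t.2)
          ≤ ∑' t, μ t * (p s + p t) :=
            ENNReal.tsum_le_tsum fun t => mul_le_mul_right (hp s t) _
        _ = p s + ∑' t, μ t * p t := by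
            simp only [mul_add, ENNReal.tsum_add, tsum_one', PMF.tsum_coe]
    calc ∑' s, convPow μ n s * ∑' b, (μ.map fun t => (s.1 + t.1, s.2 + t.2)) b * p b
        ≤ ∑' s, convPow μ n s * (p s + ∑' t, μ t * p t) :=
          ENNReal.tsum_le_tsum fun s => mul_le_mul_right (h1 s) _
      _ = (∑' s, convPow μ n s * p s) + ∑' t, μ t * p t := by
          simp only [mul_add, ENNReal.tsum_add, tsum_one', PMF.tsum_coe]
      _ ≤ n * (∑' s, μ s * p s) + ∑' t, μ t * p t := add_le_add_left ih _
      _ = (n + 1 : ℕ) * ∑' s, μ s * p s := by push_cast; ring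

lemma tsum_fp {π μ : PMF (ℕ × ℕ)} (hb : branchingFixedPoint π μ) (g : ℕ × ℕ → ℝ≥0∞) :
    ∑' kl, μ kl * g kl
      = ∑' kl : ℕ × ℕ, π kl * ∑' s, convPow μ kl.1 s * g (1 + s.1, kl.2 + s.2) := by
  conv_lhs => rw [hb]
  rw [tsum_bind']
  congr 1; ext kl; congr 1
  rw [tsum_map']

lemma solve_aux {a c mc : ℝ≥0∞} (hmc : mc < 1) (ha : a ≠ ∞) (h : a = c + mc * a) :
    a = c / (1 - mc) := by
  have hmct : mc ≠ ∞ := (hmc.trans_le le_top).ne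
  have hfin : a * mc ≠ ∞ := ENNReal.mul_ne_top ha hmct
  have h1 : a * (1 - mc) + a * mc = a := by
    rw [← mul_add, tsub_add_cancel_of_le hmc.le, mul_one]
  have h2 : a * (1 - mc) = c := by
    have : a * (1 - mc) + a * mc = c + a * mc := by
      rw [h1]; nth_rewrite 1 [h]; rw [mul_comm mc a]
    exact (ENNReal.add_left_inj hfin).mp this
  have h10 : (1 : ℝ≥0∞) - mc ≠ 0 := by
    rw [← pos_iff_ne_zero, tsub_pos_iff_lt]; exact hmc
  have h1t : (1 : ℝ≥0∞) - mc ≠ ∞ := ENNReal.sub_ne_top ENNReal.one_ne_top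
  rw [ENNReal.eq_div_iff h10 h1t, mul_comm, h2]

lemma bound_aux {a c mc : ℝ≥0∞} (hmc : mc < 1) (ha : a ≠ ∞) (h : a ≤ c + mc * a) :
    a ≤ c / (1 - mc) := by
  have hmct : mc ≠ ∞ := (hmc.trans_le le_top).ne
  have hfin : a * mc ≠ ∞ := ENNReal.mul_ne_top ha hmct
  have h1 : a * (1 - mc) + a * mc = a := by
    rw [← mul_add, tsub_add_cancel_of_le hmc.le, mul_one]
  have h2 : a * (1 - mc) ≤ c := by
    have : a * (1 - mc) + a * mc ≤ c + a * mc := by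
      rw [h1]; calc a ≤ c + mc * a := h
        _ = c + a * mc := by rw [mul_comm]
    exact (ENNReal.add_le_add_iff_right hfin).mp this
  have h10 : (1 : ℝ≥0∞) - mc ≠ 0 := by
    rw [← pos_iff_ne_zero, tsub_pos_iff_lt]; exact hmc
  have h1t : (1 : ℝ≥0∞) - mc ≠ ∞ := ENNReal.sub_ne_top ENNReal.one_ne_top
  rw [ENNReal.le_div_iff_mul_le (Or.inl h10) (Or.inl h1t)]
  exact h2

lemma cast_min_zero (N : ℕ) : ((min 0 N : ℕ) : ℝ≥0∞) = 0 := by simp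

lemma key_t {π μ : PMF (ℕ × ℕ)} (hb : branchingFixedPoint π μ) :
    ∑' kl : ℕ × ℕ, μ kl * (kl.1 : ℝ≥0∞)
      = 1 + (∑' kl : ℕ × ℕ, π kl * (kl.1 : ℝ≥0∞)) * ∑' kl : ℕ × ℕ, μ kl * (kl.1 : ℝ≥0∞) := by
  conv_lhs => rw [tsum_fp hb (fun kl => (kl.1 : ℝ≥0∞))]
  have hin : ∀ k : ℕ,
      (∑' s : ℕ × ℕ, convPow μ k s * (((1 + s.1 : ℕ) : ℝ≥0∞)))
        = 1 + (k : ℝ≥0∞) * ∑' kl : ℕ × ℕ, μ kl * (kl.1 : ℝ≥0∞) := by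
    intro k
    have := tsum_convPow_eq μ (fun s => (s.1 : ℝ≥0∞)) (by simp)
      (by intro s t; push_cast; ring) k
    push_cast
    simp only [mul_add, ENNReal.tsum_add, tsum_one', mul_one, PMF.tsum_coe]
    rw [this]
  simp only [hin]
  simp only [mul_add, ENNReal.tsum_add, tsum_one', mul_one, PMF.tsum_coe, ← mul_assoc,
    ENNReal.tsum_mul_right]

lemma key_m {π μ : PMF (ℕ × ℕ)} (hb : branchingFixedPoint π μ) :
    ∑' kl : ℕ × ℕ, μ kl * (kl.2 : ℝ≥0∞)
      = (∑' kl : ℕ × ℕ, π kl * (kl.2 : ℝ≥0∞))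
        + (∑' kl : ℕ × ℕ, π kl * (kl.1 : ℝ≥0∞)) * ∑' kl : ℕ × ℕ, μ kl * (kl.2 : ℝ≥0∞) := by
  conv_lhs => rw [tsum_fp hb (fun kl => (kl.2 : ℝ≥0∞))]
  have hin : ∀ k l : ℕ,
      (∑' s : ℕ × ℕ, convPow μ k s * (((l + s.2 : ℕ) : ℝ≥0∞)))
        = (l : ℝ≥0∞) + (k : ℝ≥0∞) * ∑' kl : ℕ × ℕ, μ kl * (kl.2 : ℝ≥0∞) := by
    intro k l
    have := tsum_convPow_eq μ (fun s => (s.2 : ℝ≥0∞)) (by simp)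
      (by intro s t; push_cast; ring) k
    push_cast
    simp only [mul_add, ENNReal.tsum_add, tsum_one']
    rw [this]
  simp only [hin]
  simp only [mul_add, ENNReal.tsum_add, ← mul_assoc, ENNReal.tsum_mul_right]

lemma key_tN {π μ : PMF (ℕ × ℕ)} (hb : branchingFixedPoint π μ) (N : ℕ) :
    ∑' kl : ℕ × ℕ, μ kl * ((min kl.1 N : ℕ) : ℝ≥0∞)
      ≤ 1 + (∑' kl : ℕ × ℕ, π kl * (kl.1 : ℝ≥0∞))
          * ∑' kl : ℕ × ℕ, μ kl * ((min kl.1 N : ℕ) : ℝ≥0∞) := by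
  set tN := ∑' kl : ℕ × ℕ, μ kl * ((min kl.1 N : ℕ) : ℝ≥0∞) with htN
  have hconv : ∀ k : ℕ,
      (∑' s : ℕ × ℕ, convPow μ k s * ((min s.1 N : ℕ) : ℝ≥0∞)) ≤ (k : ℝ≥0∞) * tN :=
    tsum_convPow_le μ (fun s => ((min s.1 N : ℕ) : ℝ≥0∞)) (by simp)
      (by intro s t
          rw [← Nat.cast_add, Nat.cast_le]
          omega)
  have hin : ∀ k : ℕ,
      (∑' s : ℕ × ℕ, convPow μ k s * ((min (1 + s.1) N : ℕ) : ℝ≥0∞))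
        ≤ 1 + (k : ℝ≥0∞) * tN := by
    intro k
    calc ∑' s : ℕ × ℕ, convPow μ k s * ((min (1 + s.1) N : ℕ) : ℝ≥0∞)
        ≤ ∑' s : ℕ × ℕ, convPow μ k s * (1 + ((min s.1 N : ℕ) : ℝ≥0∞)) := by
          refine ENNReal.tsum_le_tsum fun s => mul_le_mul_right ?_ _
          rw [show (1 : ℝ≥0∞) + ((min s.1 N : ℕ) : ℝ≥0∞) = ((1 + min s.1 N : ℕ) : ℝ≥0∞) by
            push_cast; ring, Nat.cast_le]
          omega
      _ = 1 + ∑' s : ℕ × ℕ, convPow μ k s * ((min s.1 N : ℕ) : ℝ≥0∞) := by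
          simp only [mul_add, ENNReal.tsum_add, tsum_one', PMF.tsum_coe, mul_one]
      _ ≤ 1 + (k : ℝ≥0∞) * tN := add_le_add_right (hconv k) _
  calc tN = ∑' kl : ℕ × ℕ, π kl
        * ∑' s : ℕ × ℕ, convPow μ kl.1 s * ((min (1 + s.1) N : ℕ) : ℝ≥0∞) := by
        rw [htN]; exact tsum_fp hb _
    _ ≤ ∑' kl : ℕ × ℕ, π kl * (1 + (kl.1 : ℝ≥0∞) * tN) :=
        ENNReal.tsum_le_tsum fun kl => mul_le_mul_right (hin kl.1) _
    _ = 1 + (∑' kl : ℕ × ℕ, π kl * (kl.1 : ℝ≥0∞)) * tN := by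
        simp only [mul_add, ENNReal.tsum_add, tsum_one', PMF.tsum_coe, mul_one, ← mul_assoc,
          ENNReal.tsum_mul_right]

lemma key_cN {π μ : PMF (ℕ × ℕ)} (hb : branchingFixedPoint π μ) (N : ℕ) :
    ∑' kl : ℕ × ℕ, μ kl * ((min kl.2 N : ℕ) : ℝ≥0∞)
      ≤ (∑' kl : ℕ × ℕ, π kl * (kl.2 : ℝ≥0∞))
        + (∑' kl : ℕ × ℕ, π kl * (kl.1 : ℝ≥0∞))
          * ∑' kl : ℕ × ℕ, μ kl * ((min kl.2 N : ℕ) : ℝ≥0∞) := by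
  set cN := ∑' kl : ℕ × ℕ, μ kl * ((min kl.2 N : ℕ) : ℝ≥0∞) with hcN
  have hconv : ∀ k : ℕ,
      (∑' s : ℕ × ℕ, convPow μ k s * ((min s.2 N : ℕ) : ℝ≥0∞)) ≤ (k : ℝ≥0∞) * cN :=
    tsum_convPow_le μ (fun s => ((min s.2 N : ℕ) : ℝ≥0∞)) (by simp)
      (by intro s t
          rw [← Nat.cast_add, Nat.cast_le]
          omega)
  have hin : ∀ k l : ℕ,
      (∑' s : ℕ × ℕ, convPow μ k s * ((min (l + s.2) N : ℕ) : ℝ≥0∞))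
        ≤ (l : ℝ≥0∞) + (k : ℝ≥0∞) * cN := by
    intro k l
    calc ∑' s : ℕ × ℕ, convPow μ k s * ((min (l + s.2) N : ℕ) : ℝ≥0∞)
        ≤ ∑' s : ℕ × ℕ, convPow μ k s * ((l : ℝ≥0∞) + ((min s.2 N : ℕ) : ℝ≥0∞)) := by
          refine ENNReal.tsum_le_tsum fun s => mul_le_mul_right ?_ _
          rw [show (l : ℝ≥0∞) + ((min s.2 N : ℕ) : ℝ≥0∞) = ((l + min s.2 N : ℕ) : ℝ≥0∞) by
            push_cast; ring, Nat.cast_le]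
          omega
      _ = (l : ℝ≥0∞) + ∑' s : ℕ × ℕ, convPow μ k s * ((min s.2 N : ℕ) : ℝ≥0∞) := by
          simp only [mul_add, ENNReal.tsum_add, tsum_one', PMF.tsum_coe]
      _ ≤ (l : ℝ≥0∞) + (k : ℝ≥0∞) * cN := add_le_add_right (hconv k) _
  calc cN = ∑' kl : ℕ × ℕ, π kl
        * ∑' s : ℕ × ℕ, convPow μ kl.1 s * ((min (kl.2 + s.2) N : ℕ) : ℝ≥0∞) := by
        rw [hcN]; exact tsum_fp hb _
    _ ≤ ∑' kl : ℕ × ℕ, π kl * ((kl.2 : ℝ≥0∞) + (kl.1 : ℝ≥0∞) * cN) :=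
        ENNReal.tsum_le_tsum fun kl => mul_le_mul_right (hin kl.1 kl.2) _
    _ = (∑' kl : ℕ × ℕ, π kl * (kl.2 : ℝ≥0∞))
        + (∑' kl : ℕ × ℕ, π kl * (kl.1 : ℝ≥0∞)) * cN := by
        simp_rw [mul_add, ENNReal.tsum_add, ← mul_assoc, ENNReal.tsum_mul_right]

lemma trunc_ne_top (μ : PMF (ℕ × ℕ)) (f : ℕ × ℕ → ℕ) (N : ℕ) :
    ∑' kl : ℕ × ℕ, μ kl * ((min (f kl) N : ℕ) : ℝ≥0∞) ≠ ∞ := by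
  refine ne_top_of_le_ne_top (b := (N : ℝ≥0∞)) (ENNReal.natCast_ne_top N) ?_
  calc ∑' kl : ℕ × ℕ, μ kl * ((min (f kl) N : ℕ) : ℝ≥0∞)
      ≤ ∑' kl : ℕ × ℕ, μ kl * (N : ℝ≥0∞) :=
        ENNReal.tsum_le_tsum fun kl => mul_le_mul_right (by exact_mod_cast min_le_right _ _) _
    _ = (N : ℝ≥0∞) := tsum_one' μ _

lemma sup_trunc (μ : PMF (ℕ × ℕ)) (f : ℕ × ℕ → ℕ) (c : ℝ≥0∞)
    (h : ∀ N : ℕ, ∑' kl : ℕ × ℕ, μ kl * ((min (f kl) N : ℕ) : ℝ≥0∞) ≤ c) :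
    ∑' kl : ℕ × ℕ, μ kl * ((f kl : ℕ) : ℝ≥0∞) ≤ c := by
  rw [ENNReal.tsum_eq_iSup_sum]
  refine iSup_le fun F => ?_
  set N := F.sup f with hN
  have heq : ∀ kl ∈ F, μ kl * ((f kl : ℕ) : ℝ≥0∞) = μ kl * ((min (f kl) N : ℕ) : ℝ≥0∞) := by
    intro kl hkl
    rw [min_eq_left (Finset.le_sup hkl)]
  rw [Finset.sum_congr rfl heq]
  exact le_trans (ENNReal.sum_le_tsum F) (h N)


theorem stmt3 (π μ : PMF (ℕ × ℕ))
    (hb : branchingFixedPoint π μ)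
    (hsub : ∑' kl : ℕ × ℕ, π kl * (kl.1 : ℝ≥0∞) < 1) :
    (∀ a : ℕ, 1 ≤ a →
      (∑' kl : ℕ × ℕ, (convPow μ a) kl * (kl.2 : ℝ≥0∞))
        = (a : ℝ≥0∞) * (∑' kl : ℕ × ℕ, π kl * (kl.2 : ℝ≥0∞))
            / (1 - ∑' kl : ℕ × ℕ, π kl * (kl.1 : ℝ≥0∞)) ∧
      (∑' kl : ℕ × ℕ, (convPow μ a) kl * (kl.2 : ℝ≥0∞))
        = (∑' kl : ℕ × ℕ, π kl * (kl.2 : ℝ≥0∞))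
            * (∑' kl : ℕ × ℕ, (convPow μ a) kl * (kl.1 : ℝ≥0∞))) ∧
    ((∑' kl : ℕ × ℕ, μ kl * (kl.2 : ℝ≥0∞)) < 1
      ↔ (∑' kl : ℕ × ℕ, π kl * ((kl.1 : ℝ≥0∞) + (kl.2 : ℝ≥0∞))) < 1) ∧
    ((∑' kl : ℕ × ℕ, μ kl * (kl.2 : ℝ≥0∞)) = 1
      ↔ (∑' kl : ℕ × ℕ, π kl * ((kl.1 : ℝ≥0∞) + (kl.2 : ℝ≥0∞))) = 1) ∧
    (1 < (∑' kl : ℕ × ℕ, μ kl * (kl.2 : ℝ≥0∞))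
      ↔ 1 < (∑' kl : ℕ × ℕ, π kl * ((kl.1 : ℝ≥0∞) + (kl.2 : ℝ≥0∞)))) := by
  set mc := ∑' kl : ℕ × ℕ, π kl * (kl.1 : ℝ≥0∞) with hmc
  set mm := ∑' kl : ℕ × ℕ, π kl * (kl.2 : ℝ≥0∞) with hmm
  set t := ∑' kl : ℕ × ℕ, μ kl * (kl.1 : ℝ≥0∞) with ht0
  set m := ∑' kl : ℕ × ℕ, μ kl * (kl.2 : ℝ≥0∞) with hm0
  have h10 : (1 : ℝ≥0∞) - mc ≠ 0 := by
    rw [← pos_iff_ne_zero, tsub_pos_iff_lt]; exact hsub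
  have h1t : (1 : ℝ≥0∞) - mc ≠ ∞ := ENNReal.sub_ne_top ENNReal.one_ne_top
  have hmct : mc ≠ ∞ := (hsub.trans_le le_top).ne
  have hkt : t = 1 + mc * t := by rw [ht0, hmc]; exact key_t hb
  have hkm : m = mm + mc * m := by rw [hm0, hmm, hmc]; exact key_m hb
  have htne : t ≠ ∞ := by
    refine ne_top_of_le_ne_top (ENNReal.div_lt_top ENNReal.one_ne_top h10).ne ?_
    rw [ht0]
    refine sup_trunc μ (fun kl => kl.1) _ fun N => ?_
    refine bound_aux hsub (trunc_ne_top μ _ N) ?_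
    have := key_tN hb N
    rw [← hmc] at this
    exact this
  have htval : t = 1 / (1 - mc) := solve_aux hsub htne hkt
  have hmval : m = mm / (1 - mc) := by
    by_cases hmmtop : mm = ∞
    · rw [hmmtop] at hkm ⊢
      rw [ENNReal.top_div_of_ne_top h1t, hkm, top_add]
    · have hmne : m ≠ ∞ := by
        refine ne_top_of_le_ne_top (ENNReal.div_lt_top hmmtop h10).ne ?_
        rw [hm0]
        refine sup_trunc μ (fun kl => kl.2) _ fun N => ?_
        refine bound_aux hsub (trunc_ne_top μ _ N) ?_
        have := key_cN hb N
        rw [← hmc, ← hmm] at this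
        exact this
      exact solve_aux hsub hmne hkm
  have hE2 : ∀ a : ℕ, (∑' kl : ℕ × ℕ, convPow μ a kl * (kl.2 : ℝ≥0∞)) = a * m := by
    intro a
    rw [hm0]
    exact tsum_convPow_eq μ (fun s => (s.2 : ℝ≥0∞)) (by simp)
      (by intro s t; push_cast; ring) a
  have hE1 : ∀ a : ℕ, (∑' kl : ℕ × ℕ, convPow μ a kl * (kl.1 : ℝ≥0∞)) = a * t := by
    intro a
    rw [ht0]
    exact tsum_convPow_eq μ (fun s => (s.1 : ℝ≥0∞)) (by simp)
      (by intro s t; push_cast; ring) a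
  have hS : (∑' kl : ℕ × ℕ, π kl * ((kl.1 : ℝ≥0∞) + (kl.2 : ℝ≥0∞))) = mc + mm := by
    rw [hmc, hmm]
    simp only [mul_add, ENNReal.tsum_add]
  have hlt : m < 1 ↔ mc + mm < 1 := by
    rw [hmval, ENNReal.div_lt_iff (Or.inl h10) (Or.inl h1t), one_mul,
      (ENNReal.cancel_of_ne hmct).lt_tsub_iff_right, add_comm mm mc]
  have heq : m = 1 ↔ mc + mm = 1 := by
    rw [hmval, ENNReal.div_eq_one_iff h10 h1t,
      (ENNReal.cancel_of_ne hmct).eq_tsub_iff_add_eq_of_le hsub.le, add_comm mm mc]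
  have hgt : 1 < m ↔ 1 < mc + mm := by
    constructor
    · intro h
      rcases lt_trichotomy (mc + mm) 1 with h' | h' | h'
      · exact absurd (hlt.mpr h') (lt_asymm h)
      · exact absurd (heq.mpr h') h.ne'
      · exact h'
    · intro h
      rcases lt_trichotomy m 1 with h' | h' | h'
      · exact absurd (hlt.mp h') (lt_asymm h)
      · exact absurd (heq.mp h') h.ne'
      · exact h'
  refine ⟨fun a _ => ⟨?_, ?_⟩, ?_, ?_, ?_⟩
  · rw [hE2 a, hmval, mul_div_assoc]
  · rw [hE2 a, hE1 a, hmval, htval]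
    simp only [div_eq_mul_inv, one_mul]
    ring
  · rw [hS]; exact hlt
  · rw [hS]; exact heq
  · rw [hS]; exact hgt
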